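/- For distinct integers t and t', the integral bilinear forms on ℤ² given by the matrices χ_t = [[t, 1], [-1, 0]] and χ_{t'} = [[t', 1], [-1, 0]] are not equivalent; that is, there is no matrix M in GL₂(ℤ) with Mᵀ χ_t M = χ_{t'}. -/
import Mathlib


/-- For an integer `t`, the matrix of the bilinear form `χ_t`. -/
def chiMat (t : ℤ) : Matrix (Fin 2) (Fin 2) ℤ := !![t, 1; -1, 0]

/-- For distinct integers `t` and `t'`, the integral bilinear forms on `ℤ²` given by the
matrices `χ_t = [[t, 1], [-1, 0]]` and `χ_{t'} = [[t', 1], [-1, 0]]` are not equivalent: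
there is no `M ∈ GL₂(ℤ)` with `Mᵀ χ_t M = χ_{t'}`. -/
theorem chi_forms_not_equivalent (t t' : ℤ) (h : t ≠ t') :
    ¬ ∃ M : Matrix (Fin 2) (Fin 2) ℤ, IsUnit M.det ∧
      M.transpose * chiMat t * M = chiMat t' := by
  rintro ⟨M, hdet, hM⟩
  rw [Matrix.eta_fin_two M] at hdet hM
  set a := M 0 0
  set b := M 0 1
  set c := M 1 0
  set d := M 1 1
  rw [Matrix.det_fin_two_of, Int.isUnit_iff] at hdet
  have h00 := congrFun (congrFun hM 0) 0
  have h01 := congrFun (congrFun hM 0) 1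
  have h10 := congrFun (congrFun hM 1) 0
  have h11 := congrFun (congrFun hM 1) 1
  simp [chiMat, Matrix.mul_apply, Fin.sum_univ_two, Matrix.transpose_apply, Matrix.vecHead, Matrix.vecTail] at h00 h01 h10 h11
  rcases hdet with hdet | hdet
  · rcases eq_or_ne t 0 with ht | ht
    · exact h (by linear_combination h00 + (1 - a^2) * ht)
    · have hb : b = 0 := by
        have h2 : b * b * t = 0 := by linarith
        rcases mul_eq_zero.mp h2 with h3 | h3
        · exact (mul_self_eq_zero).mp h3
        · exact absurd h3 ht
      have had : a * d = 1 := by linear_combination hdet + c * hb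
      rcases Int.eq_one_or_neg_one_of_mul_eq_one had with ha | ha
      · exact h (by linear_combination h00 - t * (a + 1) * ha)
      · exact h (by linear_combination h00 - t * (a - 1) * ha)
  · nlinarith
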